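/- If a harmonious SDF Σ in a finite group G admits a perfect lifting to G × F_q, then for every positive integer k it also admits a perfect lifting to G × F_{q^k}. Concretely, if L is a lifting of Σ with perfect companion S (so S·Δ_g = F_q^* for all g ∈ G and S·π(L) = F_q^*), and T is a complete system of representatives for the cosets of F_q^* in F_{q^k}^*, then L' = {L_t : L ∈ L, t ∈ T} (second coordinates multiplied by t) is a lifting of Σ to G × F_{q^k} with the same perfect companion S: S·Δ'_g = F_{q^k}^* for all g and S·π(L') = F_{q^k}^*. -/
import Mathlib


/-- The multiset of differences of a multisubset `B` of an additive group:
all differences `x - y` over ordered pairs of distinct positions of `B`. -/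
def mDiffs {G : Type*} [AddGroup G] [DecidableEq G] (B : Multiset G) : Multiset G :=
  B.bind fun x => (B.erase x).map fun y => x - y

lemma filter_bind' {α β : Type*} (p : β → Prop) [DecidablePred p] (m : Multiset α)
    (f : α → Multiset β) : (m.bind f).filter p = m.bind fun a => (f a).filter p := by
  induction m using Multiset.induction_on with
  | empty => simp
  | cons a m ih => simp [Multiset.cons_bind, Multiset.filter_add, ih]

lemma mDiffs_map {α β : Type*} [AddGroup α] [AddGroup β] [DecidableEq α] [DecidableEq β]
    (f : α → β) (hf : Function.Injective f) (hsub : ∀ x y, f (x - y) = f x - f y)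
    (B : Multiset α) : mDiffs (B.map f) = (mDiffs B).map f := by
  unfold mDiffs
  rw [Multiset.bind_map, Multiset.map_bind]
  apply Multiset.bind_congr
  intro x _
  rw [← Multiset.map_erase f hf, Multiset.map_map, Multiset.map_map]
  apply Multiset.map_congr rfl
  intro y _
  simp [Function.comp, hsub]

lemma key_count {F E : Type*} [Field F] [Fintype F] [DecidableEq F] [Field E] [DecidableEq E] [Algebra F E]
    (A : Multiset F) (hA : ∀ t : F, A.count t = if t = 0 then 0 else 1)
    (T : Finset E) (hT0 : (0 : E) ∉ T)
    (hTreps : ∀ e : E, e ≠ 0 →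
      (T.filter fun t => ∃ f : F, f ≠ 0 ∧ e = t * algebraMap F E f).card = 1)
    (e : E) :
    (T.val.bind fun t => A.map fun a => t * algebraMap F E a).count e
      = if e = 0 then 0 else 1 := by
  have φinj : Function.Injective (algebraMap F E) := RingHom.injective _
  have hA0 : (0 : F) ∉ A := by
    rw [← Multiset.count_eq_zero]; simpa using hA 0
  rw [Multiset.count_bind]
  have step : ∀ t ∈ T.val, ((A.map fun a => t * algebraMap F E a).count e)
      = if (∃ f : F, f ≠ 0 ∧ e = t * algebraMap F E f) then 1 else 0 := by
    intro t ht
    have ht0 : t ≠ 0 := fun h => hT0 (h ▸ ht)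
    rw [Multiset.count_map]
    by_cases hex : ∃ f : F, f ≠ 0 ∧ e = t * algebraMap F E f
    · obtain ⟨f0, hf0, he⟩ := hex
      rw [if_pos ⟨f0, hf0, he⟩]
      have hfe : (A.filter fun a => e = t * algebraMap F E a) = A.filter fun a => f0 = a := by
        apply Multiset.filter_congr
        intro a _
        constructor
        · intro h
          have : algebraMap F E f0 = algebraMap F E a := by
            apply mul_left_cancel₀ ht0; rw [← he, h]
          exact (φinj this)
        · intro h; rw [← h, he]
      rw [hfe, ← Multiset.countP_eq_card_filter, ← Multiset.count, hA f0, if_neg hf0]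
    · rw [if_neg hex]
      have : (A.filter fun a => e = t * algebraMap F E a) = 0 := by
        rw [Multiset.filter_eq_nil]
        intro a ha h
        have ha0 : a ≠ 0 := fun h0 => hA0 (h0 ▸ ha)
        exact hex ⟨a, ha0, h⟩
      simp [this]
  rw [Multiset.map_congr rfl step]
  by_cases he : e = 0
  · subst he
    rw [if_pos rfl]
    apply Multiset.sum_eq_zero
    intro x hx
    obtain ⟨t, ht, rfl⟩ := Multiset.mem_map.mp hx
    have ht0 : t ≠ 0 := fun h => hT0 (h ▸ ht)
    rw [if_neg]
    rintro ⟨f, hf, hef⟩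
    exact hf (φinj (by simpa [ht0] using hef.symm))
  · have h2 : (Multiset.map
          (fun x => if ∃ f : F, f ≠ 0 ∧ e = x * algebraMap F E f then (1:ℕ) else 0) T.val).sum
        = (T.filter fun t => ∃ f : F, f ≠ 0 ∧ e = t * algebraMap F E f).card :=
      (Finset.card_filter _ _).symm
    rw [if_neg he, h2, hTreps e he]

/-- If a harmonious SDF admits a perfect lifting `L` to `G × F_q` with perfect
companion `S`, and `T` is a complete system of representatives for the cosets of
`F_q^*` in `F_{q^k}^*`, then `L' = {L_t : L ∈ L, t ∈ T}` (second coordinates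
multiplied by `t`) is a lifting to `G × F_{q^k}` with perfect companion (the image
of) `S`: `S·Δ'_g = F_{q^k}^*` for all `g ∈ G` and `S·π(L') = F_{q^k}^*`. -/
theorem perfect_lifting_extends_to_field_extension {G F E : Type*}
    [AddGroup G] [Fintype G] [DecidableEq G]
    [Field F] [Fintype F] [DecidableEq F]
    [Field E] [Fintype E] [DecidableEq E] [Algebra F E]
    (lam : ℕ) (Sig : Multiset (Multiset G))
    (hSDF : ∀ g : G, ((Sig.bind mDiffs).count g) = lam)
    (hharm : (Sig.map Multiset.card).sum = lam)
    (L : Multiset (Finset (G × F)))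
    (hlift : L.map (fun B => B.val.map Prod.fst) = Sig)
    (S : Finset F) (hScard : S.card * lam = Fintype.card F - 1)
    (hgood : ∀ g : G, ∀ t : F,
      ((S.val.bind fun s =>
        (((L.bind fun B => mDiffs B.val).filter fun p => p.1 = g).map fun p =>
          s * p.2)).count t) = if t = 0 then 0 else 1)
    (hperfect : ∀ t : F,
      ((S.val.bind fun s =>
        ((L.bind fun B => B.val.map Prod.snd)).map fun c => s * c).count t) =
        if t = 0 then 0 else 1)
    (T : Finset E) (hT0 : (0 : E) ∉ T)
    (hTreps : ∀ e : E, e ≠ 0 →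
      (T.filter fun t => ∃ f : F, f ≠ 0 ∧ e = t * algebraMap F E f).card = 1) :
    (∀ g : G, ∀ e : E,
      (((S.image (algebraMap F E)).val.bind fun s =>
        ((((L.bind fun B => T.val.map fun t =>
            B.image fun p => (p.1, t * algebraMap F E p.2)).bind fun C =>
              mDiffs C.val).filter fun p => p.1 = g).map fun p => s * p.2)).count e) =
        if e = 0 then 0 else 1) ∧
    (∀ e : E,
      (((S.image (algebraMap F E)).val.bind fun s =>
        (((L.bind fun B => T.val.map fun t =>
            B.image fun p => (p.1, t * algebraMap F E p.2)).bind fun C =>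
              C.val.map Prod.snd)).map fun c => s * c).count e) =
        if e = 0 then 0 else 1) := by
  have φinj : Function.Injective (algebraMap F E) := RingHom.injective _
  have hSval : (S.image (algebraMap F E)).val = S.val.map (algebraMap F E) := by
    rw [Finset.image_val, Multiset.dedup_eq_self.mpr (S.nodup.map φinj)]
  have finj : ∀ t : E, t ≠ 0 →
      Function.Injective (fun p : G × F => (p.1, t * algebraMap F E p.2)) := by
    intro t ht ⟨a, b⟩ ⟨c, d⟩ h
    simp only [Prod.mk.injEq] at h
    exact Prod.ext h.1 (φinj (mul_left_cancel₀ ht h.2))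
  have fsub : ∀ t : E, ∀ x y : G × F,
      (fun p : G × F => (p.1, t * algebraMap F E p.2)) (x - y)
        = (fun p : G × F => (p.1, t * algebraMap F E p.2)) x
          - (fun p : G × F => (p.1, t * algebraMap F E p.2)) y := by
    intro t x y
    simp only [Prod.fst_sub, Prod.snd_sub, map_sub, mul_sub, Prod.mk_sub_mk]
  have himg : ∀ t ∈ T.val, ∀ B : Finset (G × F),
      (B.image fun p => (p.1, t * algebraMap F E p.2)).val
        = B.val.map fun p => (p.1, t * algebraMap F E p.2) := by
    intro t ht B
    have ht0 : t ≠ 0 := fun h => hT0 (h ▸ ht)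
    rw [Finset.image_val, Multiset.dedup_eq_self.mpr (B.nodup.map (finj t ht0))]
  have e1 : ((L.bind fun B => T.val.map fun t =>
        B.image fun p => (p.1, t * algebraMap F E p.2)).bind fun C => mDiffs C.val)
      = T.val.bind fun t => (L.bind fun B => mDiffs B.val).map
          fun p => (p.1, t * algebraMap F E p.2) := by
    rw [Multiset.bind_assoc]
    rw [Multiset.bind_congr (g := fun B => T.val.bind fun t =>
      (mDiffs B.val).map fun p => (p.1, t * algebraMap F E p.2)) ?_]
    · rw [Multiset.bind_bind]
      apply Multiset.bind_congr
      intro t _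
      rw [Multiset.map_bind]
    · intro B _
      rw [Multiset.bind_map]
      apply Multiset.bind_congr
      intro t ht
      have ht0 : t ≠ 0 := fun h => hT0 (h ▸ ht)
      rw [himg t ht B, mDiffs_map _ (finj t ht0) (fsub t)]
  have e1' : ((L.bind fun B => T.val.map fun t =>
        B.image fun p => (p.1, t * algebraMap F E p.2)).bind fun C => C.val.map Prod.snd)
      = T.val.bind fun t => (L.bind fun B => B.val.map Prod.snd).map
          fun c => t * algebraMap F E c := by
    rw [Multiset.bind_assoc]
    rw [Multiset.bind_congr (g := fun B => T.val.bind fun t =>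
      B.val.map fun p => t * algebraMap F E p.2) ?_]
    · rw [Multiset.bind_bind]
      apply Multiset.bind_congr
      intro t _
      rw [Multiset.map_bind]
      apply Multiset.bind_congr
      intro B _
      rw [Multiset.map_map]
      rfl
    · intro B _
      rw [Multiset.bind_map]
      apply Multiset.bind_congr
      intro t ht
      rw [himg t ht B, Multiset.map_map]
      rfl
  constructor
  · intro g e
    have goal_eq : ((S.image (algebraMap F E)).val.bind fun s =>
        ((((L.bind fun B => T.val.map fun t =>
            B.image fun p => (p.1, t * algebraMap F E p.2)).bind fun C =>
              mDiffs C.val).filter fun p => p.1 = g).map fun p => s * p.2))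
        = T.val.bind fun t =>
            (S.val.bind fun s =>
              (((L.bind fun B => mDiffs B.val).filter fun p => p.1 = g).map fun p =>
                s * p.2)).map fun a => t * algebraMap F E a := by
      rw [hSval, e1, filter_bind']
      simp only [Multiset.bind_map, Multiset.map_bind, Multiset.map_map, Multiset.filter_map]
      rw [Multiset.bind_bind]
      apply Multiset.bind_congr
      intro t ht
      apply Multiset.bind_congr
      intro s hs
      rw [← Multiset.map_bind, Multiset.filter_map, Multiset.map_map]
      have hfil : (Multiset.filter
            ((fun p : G × E => p.1 = g) ∘ fun p : G × F => (p.1, t * algebraMap F E p.2))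
            (L.bind fun B => mDiffs B.val))
          = Multiset.filter (fun p : G × F => p.1 = g) (L.bind fun B => mDiffs B.val) :=
        Multiset.filter_congr (fun p _ => Iff.rfl)
      rw [hfil]
      apply Multiset.map_congr rfl
      intro p _
      simp only [Function.comp_apply, map_mul]
      ring
    rw [goal_eq]
    exact key_count _ (hgood g) T hT0 hTreps e
  · intro e
    have goal_eq : ((S.image (algebraMap F E)).val.bind fun s =>
        (((L.bind fun B => T.val.map fun t =>
            B.image fun p => (p.1, t * algebraMap F E p.2)).bind fun C =>
              C.val.map Prod.snd)).map fun c => s * c)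
        = T.val.bind fun t =>
            (S.val.bind fun s =>
              ((L.bind fun B => B.val.map Prod.snd)).map fun c => s * c).map
                fun a => t * algebraMap F E a := by
      rw [hSval, e1']
      simp only [Multiset.bind_map, Multiset.map_bind, Multiset.map_map]
      rw [Multiset.bind_bind]
      apply Multiset.bind_congr
      intro t ht
      apply Multiset.bind_congr
      intro s hs
      apply Multiset.bind_congr
      intro B _
      apply Multiset.map_congr rfl
      intro p _
      simp only [Function.comp_apply, map_mul]
      ring
    rw [goal_eq]
    exact key_count _ hperfect T hT0 hTreps e
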